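/- arXiv:2112.11073 — 2 statements merged into one kernel-verified Lean document; each statement's English description precedes it below -/
import Mathlib

section
/- Let 𝔤₀ be a real semisimple Lie algebra with Cartan involution θ, Cartan decomposition 𝔤₀ = 𝔨₀ ⊕ 𝔭₀, Iwasawa decomposition data 𝔞₀, 𝔫₀ and restricted root system Σ with positive system Σ⁺. Let B be a positive multiple of the Killing form, and let X₁,…,X_d be a basis of 𝔭₀ ∩ (𝔨₀ ⊕ 𝔫₀) with B-dual basis X̃₁,…,X̃_d. Then ∑_j [X̃_j, κ(X_j)] lies in 𝔞₀ and B(∑_j [X̃_j, κ(X_j)], H) = 2ρ(H) for all H ∈ 𝔞₀, where κ(X) denotes the 𝔨₀-component of X in the decomposition 𝔤₀ = 𝔨₀ ⊕ 𝔞₀ ⊕ 𝔫₀ and ρ = ½∑_{α∈Σ⁺} dim(𝔤^α)·α. -/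
open Finset Submodule in
lemma contr_eq {L M : Type*} [AddCommGroup L] [Module ℝ L] [AddCommGroup M] [Module ℝ M]
    {ι₁ ι₂ : Type*} [Fintype ι₁] [Fintype ι₂] [DecidableEq ι₁] [DecidableEq ι₂]
    (P : L →ₗ[ℝ] L →ₗ[ℝ] ℝ) (hP : ∀ v w, P v w = P w v)
    (F : L →ₗ[ℝ] L →ₗ[ℝ] M) (U : Submodule ℝ L)
    (x xt : ι₁ → L) (y yt : ι₂ → L)
    (hxU : Submodule.span ℝ (Set.range x) = U)
    (hyU : Submodule.span ℝ (Set.range y) = U)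
    (hxtU : ∀ i, xt i ∈ U) (hytU : ∀ i, yt i ∈ U)
    (hd1 : ∀ i j, P (xt i) (x j) = if i = j then 1 else 0)
    (hd2 : ∀ i j, P (yt i) (y j) = if i = j then 1 else 0) :
    ∑ i, F (xt i) (x i) = ∑ i, F (yt i) (y i) := by
  have hxm : ∀ j, x j ∈ U := fun j => hxU ▸ subset_span (Set.mem_range_self j)
  have hym : ∀ j, y j ∈ U := fun j => hyU ▸ subset_span (Set.mem_range_self j)
  have hnd_x : ∀ v ∈ U, (∀ k, P (xt k) v = 0) → v = 0 := by
    intro v hv h0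
    rw [← hxU, mem_span_range_iff_exists_fun ℝ] at hv
    obtain ⟨cf, hcf⟩ := hv
    have hc : ∀ k, cf k = 0 := by
      intro k
      have h1 : P (xt k) v = cf k := by
        rw [← hcf]
        simp only [map_sum, map_smul, smul_eq_mul, hd1, mul_ite, mul_one, mul_zero]
        simp
      rw [h0 k] at h1
      exact h1.symm
    rw [← hcf]
    simp [hc]
  have hnd_y : ∀ v ∈ U, (∀ k, P (yt k) v = 0) → v = 0 := by
    intro v hv h0
    rw [← hyU, mem_span_range_iff_exists_fun ℝ] at hv
    obtain ⟨cf, hcf⟩ := hv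
    have hc : ∀ k, cf k = 0 := by
      intro k
      have h1 : P (yt k) v = cf k := by
        rw [← hcf]
        simp only [map_sum, map_smul, smul_eq_mul, hd2, mul_ite, mul_one, mul_zero]
        simp
      rw [h0 k] at h1
      exact h1.symm
    rw [← hcf]
    simp [hc]
  have hnd_y' : ∀ v ∈ U, (∀ k, P v (y k) = 0) → v = 0 := by
    intro v hv h0
    have hPv : ∀ w ∈ U, P v w = 0 := by
      intro w hw
      rw [← hyU, mem_span_range_iff_exists_fun ℝ] at hw
      obtain ⟨cf, hcf⟩ := hw
      rw [← hcf]
      simp only [map_sum, map_smul, smul_eq_mul, h0, mul_zero]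
      simp
    refine hnd_y v hv fun k => ?_
    rw [hP]
    exact hPv (yt k) (hytU k)
  have expY : ∀ i, y i = ∑ j, P (xt j) (y i) • x j := by
    intro i
    have hmem : y i - ∑ j, P (xt j) (y i) • x j ∈ U :=
      sub_mem (hym i) (sum_mem fun j _ => Submodule.smul_mem _ _ (hxm j))
    have h0 : ∀ k, P (xt k) (y i - ∑ j, P (xt j) (y i) • x j) = 0 := by
      intro k
      simp only [map_sub, map_sum, map_smul, smul_eq_mul, hd1, mul_ite, mul_one, mul_zero]
      simp
    have h := hnd_x _ hmem h0
    rw [sub_eq_zero] at h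
    exact h
  have expX : ∀ j, x j = ∑ i, P (yt i) (x j) • y i := by
    intro j
    have hmem : x j - ∑ i, P (yt i) (x j) • y i ∈ U :=
      sub_mem (hxm j) (sum_mem fun i _ => Submodule.smul_mem _ _ (hym i))
    have h0 : ∀ k, P (yt k) (x j - ∑ i, P (yt i) (x j) • y i) = 0 := by
      intro k
      simp only [map_sub, map_sum, map_smul, smul_eq_mul, hd2, mul_ite, mul_one, mul_zero]
      simp
    have h := hnd_y _ hmem h0
    rw [sub_eq_zero] at h
    exact h
  have expXt : ∀ j, xt j = ∑ i, P (xt j) (y i) • yt i := by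
    intro j
    have hmem : xt j - ∑ i, P (xt j) (y i) • yt i ∈ U :=
      sub_mem (hxtU j) (sum_mem fun i _ => Submodule.smul_mem _ _ (hytU i))
    have h0 : ∀ k, P (xt j - ∑ i, P (xt j) (y i) • yt i) (y k) = 0 := by
      intro k
      simp only [map_sub, LinearMap.sub_apply, map_sum, LinearMap.sum_apply,
        map_smul, LinearMap.smul_apply, smul_eq_mul]
      rw [sub_eq_zero]
      rw [Finset.sum_congr rfl (fun i _ => by rw [hd2 i k])]
      simp
    have h := hnd_y' _ hmem h0
    rw [sub_eq_zero] at h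
    exact h
  have key : ∀ i k, (∑ j, P (xt j) (y i) * P (yt k) (x j)) = if k = i then 1 else 0 := by
    intro i k
    have h := congrArg (fun z => P (yt k) z) (expY i)
    simp only [map_sum, map_smul, smul_eq_mul] at h
    rw [hd2 k i] at h
    exact h.symm
  calc ∑ j, F (xt j) (x j)
      = ∑ j, ∑ i, ∑ k, (P (xt j) (y i) * P (yt k) (x j)) • F (yt i) (y k) := by
        refine Finset.sum_congr rfl fun j _ => ?_
        conv_lhs => rw [expXt j, expX j]
        simp only [map_sum, LinearMap.sum_apply, map_smul, LinearMap.smul_apply, smul_smul,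
          Finset.smul_sum]
        rw [Finset.sum_comm]
        exact Finset.sum_congr rfl fun a _ => Finset.sum_congr rfl fun b _ => by rw [mul_comm]
    _ = ∑ i, ∑ k, (∑ j, P (xt j) (y i) * P (yt k) (x j)) • F (yt i) (y k) := by
        rw [Finset.sum_comm]
        refine Finset.sum_congr rfl fun i _ => ?_
        rw [Finset.sum_comm]
        refine Finset.sum_congr rfl fun k _ => ?_
        rw [Finset.sum_smul]
    _ = ∑ i, F (yt i) (y i) := by
        refine Finset.sum_congr rfl fun i _ => ?_
        rw [Finset.sum_congr rfl (fun k _ => by rw [key i k])]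
        simp



/-- The restricted root space of a functional `α` on a subspace `𝔞` of a real Lie algebra. -/
def restrictedRootSpace (L : Type) [LieRing L] [LieAlgebra ℝ L] (𝔞 : Submodule ℝ L)
    (α : ↥𝔞 →ₗ[ℝ] ℝ) : Submodule ℝ L where
  carrier := {x : L | ∀ H : ↥𝔞, ⁅(H : L), x⁆ = α H • x}
  add_mem' := fun ha hb => by
    intro H
    rw [lie_add, ha H, hb H, smul_add]
  zero_mem' := by intro H; simp
  smul_mem' := fun c x hx => by
    intro H
    rw [lie_smul, hx H, smul_comm]

/-- Let `𝔤₀` be a real semisimple Lie algebra with Cartan involution `θ`, Cartan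
decomposition `𝔤₀ = 𝔨₀ ⊕ 𝔭₀`, Iwasawa data `𝔞₀, 𝔫₀` with restricted roots `Σ⁺`,
and `B` a positive multiple of the Killing form.  If `X₁,…,X_d` is a basis of
`𝔭₀ ∩ (𝔨₀ ⊕ 𝔫₀)` with `B`-dual basis `X̃₁,…,X̃_d`, then `∑ⱼ [X̃ⱼ, κ(Xⱼ)] ∈ 𝔞₀`
and `B(∑ⱼ [X̃ⱼ, κ(Xⱼ)], H) = 2ρ(H)` for all `H ∈ 𝔞₀`, where `κ` is the
`𝔨₀`-component in `𝔤₀ = 𝔨₀ ⊕ 𝔞₀ ⊕ 𝔫₀` and `ρ = ½ ∑_{α ∈ Σ⁺} dim(𝔤^α)·α`. -/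
theorem sum_bracket_dual_basis_eq_two_rho
    (L : Type) [LieRing L] [LieAlgebra ℝ L] [Module.Finite ℝ L]
    [LieAlgebra.IsSemisimple ℝ L]
    (c : ℝ) (hc : 0 < c) (B : LinearMap.BilinForm ℝ L) (hB : B = c • killingForm ℝ L)
    (θ : L →ₗ⁅ℝ⁆ L) (hθ : ∀ x, θ (θ x) = x)
    (𝔨 𝔭 𝔞 𝔫 : Submodule ℝ L)
    (h𝔨 : ∀ x : L, x ∈ 𝔨 ↔ θ x = x) (h𝔭 : ∀ x : L, x ∈ 𝔭 ↔ θ x = -x)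
    (h𝔞𝔭 : 𝔞 ≤ 𝔭)
    (h𝔞ab : ∀ x ∈ 𝔞, ∀ y ∈ 𝔞, ⁅x, y⁆ = (0 : L))
    (h𝔞max : ∀ x ∈ 𝔭, (∀ y ∈ 𝔞, ⁅x, y⁆ = (0 : L)) → x ∈ 𝔞)
    (Sigmaplus : Finset (↥𝔞 →ₗ[ℝ] ℝ))
    (hroots : ∀ α ∈ Sigmaplus, α ≠ 0)
    (h𝔫 : 𝔫 = ⨆ α ∈ Sigmaplus, restrictedRootSpace L 𝔞 α)
    (hIwasawa : 𝔨 ⊔ 𝔞 ⊔ 𝔫 = ⊤)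
    (hdisj₁ : ∀ x ∈ 𝔨, x ∈ 𝔞 ⊔ 𝔫 → x = 0)
    (hdisj₂ : 𝔞 ⊓ 𝔫 = ⊥)
    (κ : L →ₗ[ℝ] L) (hκ𝔨 : ∀ x : L, κ x ∈ 𝔨) (hκrest : ∀ x : L, x - κ x ∈ 𝔞 ⊔ 𝔫)
    (d : ℕ) (X Xt : Fin d → L)
    (hX : ∀ j, X j ∈ 𝔭 ⊓ (𝔨 ⊔ 𝔫)) (hXt : ∀ j, Xt j ∈ 𝔭 ⊓ (𝔨 ⊔ 𝔫))
    (hXindep : LinearIndependent ℝ X)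
    (hXspan : Submodule.span ℝ (Set.range X) = 𝔭 ⊓ (𝔨 ⊔ 𝔫))
    (hdual : ∀ i j, B (Xt i) (X j) = if i = j then (1 : ℝ) else 0) :
    (∑ j, ⁅Xt j, κ (X j)⁆) ∈ 𝔞 ∧
      ∀ H : ↥𝔞, B (∑ j, ⁅Xt j, κ (X j)⁆) (H : L)
        = 2 * ((1 / 2) * ∑ α ∈ Sigmaplus,
            (Module.finrank ℝ ↥(restrictedRootSpace L 𝔞 α) : ℝ) * α H) := by
  classical
  set W : (↥𝔞 →ₗ[ℝ] ℝ) → Submodule ℝ L := restrictedRootSpace L 𝔞 with hWdef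
  -- basic θ facts
  have hθk : ∀ x ∈ 𝔨, θ x = x := fun x hx => (h𝔨 x).1 hx
  have hθp : ∀ x ∈ 𝔭, θ x = -x := fun x hx => (h𝔭 x).1 hx
  have hθlie : ∀ x y : L, θ ⁅x, y⁆ = ⁅θ x, θ y⁆ := fun x y => θ.map_lie x y
  have hθadd : ∀ x y : L, θ (x + y) = θ x + θ y := fun x y => θ.map_add x y
  have hθsub : ∀ x y : L, θ (x - y) = θ x - θ y := fun x y => θ.map_sub x y
  have hθneg : ∀ x : L, θ (-x) = -θ x := fun x => θ.map_neg x
  have hθsmul : ∀ (t : ℝ) (x : L), θ (t • x) = t • θ x := fun t x => θ.map_smul t x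
  have hkp0 : ∀ x : L, x ∈ 𝔨 → x ∈ 𝔭 → x = 0 := by
    intro x h1 h2
    have h3 : x = -x := by
      conv_lhs => rw [← hθk x h1]
      exact hθp x h2
    have h4 : (2:ℝ) • x = 0 := by
      rw [two_smul]
      rw [add_eq_zero_iff_eq_neg]
      exact h3
    simpa using h4
  -- B facts
  let θe : L ≃ₗ⁅ℝ⁆ L := ⟨θ, θ, hθ, hθ⟩
  have hBθ : ∀ x y, B (θ x) (θ y) = B x y := by
    intro x y
    rw [hB]
    simp only [LinearMap.smul_apply, smul_eq_mul]
    rw [show killingForm ℝ L (θ x) (θ y) = killingForm ℝ L x y from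
      LieAlgebra.killingForm_of_equiv_apply θe x y]
  have hBsymm : ∀ x y, B x y = B y x := by
    intro x y
    rw [hB]
    simp only [LinearMap.smul_apply, smul_eq_mul]
    congr 1
    exact LieModule.traceForm_comm ℝ L L x y
  have hBinv : ∀ x y z, B ⁅x, y⁆ z = B x ⁅y, z⁆ := by
    intro x y z
    rw [hB]
    simp only [LinearMap.smul_apply, smul_eq_mul]
    congr 1
    exact LieModule.traceForm_apply_lie_apply ℝ L L x y z
  -- bracket membership
  have hpp : ∀ x ∈ 𝔭, ∀ y ∈ 𝔭, ⁅x, y⁆ ∈ 𝔨 := by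
    intro x hx y hy
    rw [h𝔨, hθlie, hθp x hx, hθp y hy, neg_lie, lie_neg, neg_neg]
  -- root space facts
  have hWmem : ∀ (α) (x : L), x ∈ W α ↔ ∀ H : ↥𝔞, ⁅(H:L), x⁆ = α H • x := fun _ _ => Iff.rfl
  have hWapp : ∀ (α) (x : L), x ∈ W α → ∀ H : ↥𝔞, ⁅(H:L), x⁆ = α H • x :=
    fun α x hx => (hWmem α x).1 hx
  have hWn : ∀ α ∈ Sigmaplus, W α ≤ 𝔫 := by
    intro α hα
    rw [h𝔫]
    exact le_biSup _ hα
  have hnle : ∀ q : Submodule ℝ L, (∀ α ∈ Sigmaplus, W α ≤ q) → 𝔫 ≤ q := by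
    intro q h
    rw [h𝔫]
    exact iSup₂_le h
  have hWθ : ∀ (α) (x : L), x ∈ W α → θ x ∈ W (-α) := by
    intro α x hx
    refine (hWmem _ _).2 fun H => ?_
    have h1 : ⁅(H:L), θ x⁆ = θ ⁅θ (H:L), x⁆ := by rw [hθlie, hθ]
    rw [h1, hθp _ (h𝔞𝔭 H.2), neg_lie, hθneg, hWapp _ _ hx H, hθsmul]
    simp [neg_smul]
  have hexH : ∀ α : ↥𝔞 →ₗ[ℝ] ℝ, α ≠ 0 → ∃ H : ↥𝔞, α H ≠ 0 := by
    intro α h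
    by_contra h'
    push_neg at h'
    exact h (by ext H; simp [h' H])
  have horth : ∀ α β : ↥𝔞 →ₗ[ℝ] ℝ, α + β ≠ 0 → ∀ x ∈ W α, ∀ y ∈ W β, B x y = 0 := by
    intro α β hab x hx y hy
    obtain ⟨H, hH⟩ := hexH _ hab
    have e1 : B x ⁅(H:L), y⁆ = - B ⁅(H:L), x⁆ y := by
      rw [← hBinv, show ⁅x,(H:L)⁆ = -⁅(H:L),x⁆ from by rw [← lie_skew]]
      simp only [map_neg, LinearMap.neg_apply]
    have e2 : β H * B x y = -(α H * B x y) := by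
      have l := hWapp _ _ hx H
      have r := hWapp _ _ hy H
      calc β H * B x y = B x (β H • y) := by rw [map_smul]; simp
        _ = B x ⁅(H:L), y⁆ := by rw [r]
        _ = - B ⁅(H:L), x⁆ y := e1
        _ = - B ((α H) • x) y := by rw [l]
        _ = -(α H * B x y) := by rw [map_smul]; simp
    have e3 : (α H + β H) * B x y = 0 := by linear_combination e2
    have hne : α H + β H ≠ 0 := by
      simpa using hH
    exact (mul_eq_zero.mp e3).resolve_left hne
  have hWp0 : ∀ (α : ↥𝔞 →ₗ[ℝ] ℝ), α ≠ 0 → ∀ x ∈ W α, x ∈ 𝔭 → x = 0 := by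
    intro α hα x hx hxp
    obtain ⟨H, hH⟩ := hexH α hα
    have h1 : ⁅(H:L), x⁆ ∈ 𝔨 := hpp _ (h𝔞𝔭 H.2) _ hxp
    have h2 : ⁅(H:L), x⁆ ∈ 𝔭 := by
      rw [hWapp _ _ hx H]
      exact Submodule.smul_mem _ _ hxp
    have h3 := hkp0 _ h1 h2
    rw [hWapp _ _ hx H] at h3
    exact (smul_eq_zero.mp h3).resolve_left hH
  have hWzero : ∀ α ∈ Sigmaplus, ∀ β ∈ Sigmaplus, α + β = 0 → ∀ x ∈ W α, x = 0 := by
    intro α hα β hβ hab x hx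
    have hβα : -α = β := by
      have := eq_neg_of_add_eq_zero_right hab
      rw [this]
    have hθx : θ x ∈ 𝔫 := hWn β hβ (hβα ▸ hWθ α x hx)
    have hxk : x + θ x ∈ 𝔨 := (h𝔨 _).2 (by rw [hθadd, hθ]; abel)
    have hxan : x + θ x ∈ 𝔞 ⊔ 𝔫 := Submodule.mem_sup_right (add_mem (hWn α hα hx) hθx)
    have h0 := hdisj₁ _ hxk hxan
    have hxp : x ∈ 𝔭 := by
      refine (h𝔭 _).2 ?_
      have h0' : θ x + x = 0 := by rw [add_comm]; exact h0
      exact eq_neg_of_add_eq_zero_left h0'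
    exact hWp0 α (hroots α hα) x hx hxp
  have hBnn : ∀ z ∈ 𝔫, ∀ z' ∈ 𝔫, B z z' = 0 := by
    have step : ∀ α ∈ Sigmaplus, ∀ x ∈ W α, ∀ z ∈ 𝔫, B x z = 0 := by
      intro α hα x hx z hz
      have hk : 𝔫 ≤ LinearMap.ker (B x) := by
        refine hnle _ fun β hβ y hy => LinearMap.mem_ker.2 ?_
        by_cases h0 : α + β = 0
        · rw [hWzero α hα β hβ h0 x hx]
          simp
        · exact horth α β h0 x hx y hy
      exact hk hz
    intro z hz z' hz'
    have hk : 𝔫 ≤ LinearMap.ker (B.flip z') := by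
      refine hnle _ fun α hα x hx => LinearMap.mem_ker.2 ?_
      exact step α hα x hx z' hz'
    exact LinearMap.mem_ker.1 (hk hz)
  -- the map E
  set Em : L →ₗ[ℝ] L := LinearMap.id - (θ : L →ₗ⁅ℝ⁆ L).toLinearMap with hEmdef
  have hEmApp : ∀ x, Em x = x - θ x := by
    intro x
    simp [hEmdef]
  have hEV : ∀ x ∈ 𝔫, Em x ∈ 𝔭 ⊓ (𝔨 ⊔ 𝔫) := by
    intro x hx
    refine Submodule.mem_inf.2 ⟨?_, ?_⟩
    · rw [hEmApp]
      exact (h𝔭 _).2 (by rw [hθsub, hθ]; abel)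
    · have he : Em x = -(x + θ x) + (2:ℝ) • x := by rw [hEmApp]; module
      rw [he]
      exact add_mem
        (Submodule.mem_sup_left (neg_mem ((h𝔨 _).2 (by rw [hθadd, hθ]; abel))))
        (Submodule.mem_sup_right (Submodule.smul_mem _ _ hx))
  have hEsurj : ∀ v ∈ 𝔭 ⊓ (𝔨 ⊔ 𝔫), ∃ z ∈ 𝔫, Em z = v := by
    intro v hv
    obtain ⟨hvp, hvkn⟩ := Submodule.mem_inf.1 hv
    rw [Submodule.mem_sup] at hvkn
    obtain ⟨k, hk, n, hn, hkn⟩ := hvkn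
    refine ⟨(1/2 : ℝ) • n, Submodule.smul_mem _ _ hn, ?_⟩
    have h1 : k + θ n = -(k + n) := by
      have h2' : θ (k + n) = -(k + n) := by rw [hkn]; exact hθp v hvp
      rw [hθadd, hθk k hk] at h2'
      exact h2'
    have h2 : θ n = -k - n - k := by
      have := eq_sub_of_add_eq' h1
      rw [this]
      abel
    rw [hEmApp, hθsmul, h2, ← hkn]
    module
  have hκuniq : ∀ v k' : L, k' ∈ 𝔨 → v - k' ∈ 𝔞 ⊔ 𝔫 → κ v = k' := by
    intro v k' hk' hmem
    have h1 : k' - κ v ∈ 𝔨 := sub_mem hk' (hκ𝔨 v)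
    have h2 : k' - κ v ∈ 𝔞 ⊔ 𝔫 := by
      have h3 := sub_mem (hκrest v) hmem
      have he : (v - κ v) - (v - k') = k' - κ v := by abel
      rwa [he] at h3
    have h4 := hdisj₁ _ h1 h2
    rw [sub_eq_zero] at h4
    exact h4.symm
  have hκE : ∀ x ∈ 𝔫, κ (Em x) = -(x + θ x) := by
    intro x hx
    refine hκuniq _ _ (neg_mem ((h𝔨 _).2 (by rw [hθadd, hθ]; abel))) ?_
    have he : Em x - -(x + θ x) = (2:ℝ) • x := by rw [hEmApp]; module
    rw [he]
    exact Submodule.mem_sup_right (Submodule.smul_mem _ _ hx)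
  -- nondegeneracy on V and on 𝔫
  have hVnd : ∀ v ∈ 𝔭 ⊓ (𝔨 ⊔ 𝔫), (∀ k, B (Xt k) v = 0) → v = 0 := by
    intro v hv h0
    rw [← hXspan, Submodule.mem_span_range_iff_exists_fun ℝ] at hv
    obtain ⟨cf, hcf⟩ := hv
    have hc : ∀ k, cf k = 0 := by
      intro k
      have h1 : B (Xt k) v = cf k := by
        rw [← hcf]
        simp only [map_sum, map_smul, smul_eq_mul, hdual, mul_ite, mul_one, mul_zero]
        simp
      rw [h0 k] at h1
      exact h1.symm
    rw [← hcf]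
    simp [hc]
  have hPnd : ∀ x ∈ 𝔫, (∀ y ∈ 𝔫, B (Em x) (Em y) = 0) → x = 0 := by
    intro x hx h0
    have h1 : ∀ k, B (Xt k) (Em x) = 0 := by
      intro k
      obtain ⟨z, hz, hzeq⟩ := hEsurj (Xt k) (hXt k)
      rw [← hzeq, hBsymm]
      exact h0 z hz
    have h2 := hVnd (Em x) (hEV x hx) h1
    rw [hEmApp, sub_eq_zero] at h2
    exact hdisj₁ x ((h𝔨 x).2 h2.symm) (Submodule.mem_sup_right hx)
  have hPorth : ∀ α ∈ Sigmaplus, ∀ β ∈ Sigmaplus, α ≠ β →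
      ∀ x ∈ W α, ∀ y ∈ W β, B (Em x) (Em y) = 0 := by
    intro α hα β hβ hne x hx y hy
    have t1 : B x y = 0 := hBnn x (hWn α hα hx) y (hWn β hβ hy)
    have t2 : B (θ x) (θ y) = 0 := by rw [hBθ]; exact t1
    have t3 : B x (θ y) = 0 := by
      refine horth α (-β) ?_ x hx (θ y) (hWθ β y hy)
      intro h
      exact hne (by linear_combination (norm := module) h)
    have t4 : B (θ x) y = 0 := by
      refine horth (-α) β ?_ (θ x) (hWθ α x hx) y hy
      intro h
      exact hne (by linear_combination (norm := module) -h)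
    rw [hEmApp, hEmApp]
    simp only [map_sub, LinearMap.sub_apply]
    rw [t1, t2, t3, t4]
    ring
  -- block data
  let σ : {a // a ∈ Sigmaplus} → Type := fun α => Fin (Module.finrank ℝ ↥(W ↑α))
  let cb : (α : {a // a ∈ Sigmaplus}) → Module.Basis (σ α) ℝ ↥(W ↑α) := fun α => Module.finBasis ℝ _
  let PW : (α : {a // a ∈ Sigmaplus}) → LinearMap.BilinForm ℝ ↥(W ↑α) := fun α =>
    B.compl₁₂ (Em ∘ₗ (W ↑α).subtype) (Em ∘ₗ (W ↑α).subtype)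
  have hPWapp : ∀ (α : {a // a ∈ Sigmaplus}) (x y : ↥(W ↑α)), PW α x y = B (Em ↑x) (Em ↑y) := by
    intro α x y
    simp [PW, LinearMap.compl₁₂_apply]
  have hPWnd : ∀ α, (PW α).Nondegenerate := by
    intro α
    refine (LinearMap.IsRefl.nondegenerate_iff_separatingLeft (B := PW α)
      (fun x y h => by rw [hPWapp] at h ⊢; rw [hBsymm]; exact h)).mpr ?_
    intro x hx
    have hx0 : (x:L) = 0 := by
      refine hPnd _ (hWn _ α.2 x.2) ?_
      intro y hy
      have hk : 𝔫 ≤ LinearMap.ker ((B (Em ↑x)).comp Em) := by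
        refine hnle _ fun β hβ y' hy' => LinearMap.mem_ker.2 ?_
        rw [LinearMap.comp_apply]
        by_cases hβα : (↑α : ↥𝔞 →ₗ[ℝ] ℝ) = β
        · subst hβα
          have := hx ⟨y', hy'⟩
          rwa [hPWapp] at this
        · exact hPorth _ α.2 β hβ hβα _ x.2 _ hy'
      have := hk hy
      rwa [LinearMap.mem_ker, LinearMap.comp_apply] at this
    exact (Submodule.coe_eq_zero).mp hx0
  let db : (α : {a // a ∈ Sigmaplus}) → Module.Basis (σ α) ℝ ↥(W ↑α) := fun α =>
    (PW α).dualBasis (hPWnd α) (cb α)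
  let nv : ((α : {a // a ∈ Sigmaplus}) × σ α) → L := fun i => ↑(cb i.1 i.2)
  let mv : ((α : {a // a ∈ Sigmaplus}) × σ α) → L := fun i => ↑(db i.1 i.2)
  have hnvW : ∀ i, nv i ∈ W ↑i.1 := fun i => (cb i.1 i.2).2
  have hmvW : ∀ i, mv i ∈ W ↑i.1 := fun i => (db i.1 i.2).2
  have hnvn : ∀ i, nv i ∈ 𝔫 := fun i => hWn _ i.1.2 (hnvW i)
  have hmvn : ∀ i, mv i ∈ 𝔫 := fun i => hWn _ i.1.2 (hmvW i)
  have hspanW : ∀ (α : {a // a ∈ Sigmaplus}) (b : Module.Basis (σ α) ℝ ↥(W ↑α)),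
      Submodule.span ℝ (Set.range (fun a => ((b a : ↥(W ↑α)) : L))) = W ↑α := by
    intro α b
    have he : (fun a => ((b a : ↥(W ↑α)) : L)) = (W ↑α).subtype ∘ b := rfl
    rw [he, Set.range_comp, Submodule.span_image, b.span_eq, Submodule.map_top,
      Submodule.range_subtype]
  have hnvspan : Submodule.span ℝ (Set.range nv) = 𝔫 := by
    apply le_antisymm
    · rw [Submodule.span_le]
      rintro _ ⟨i, rfl⟩
      exact hnvn i
    · refine hnle _ fun α hα => ?_
      rw [← hspanW ⟨α, hα⟩ (cb ⟨α, hα⟩)]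
      apply Submodule.span_mono
      rintro _ ⟨a, rfl⟩
      exact ⟨⟨⟨α, hα⟩, a⟩, rfl⟩
  have hPdual : ∀ i j, B (Em (mv i)) (Em (nv j)) = if i = j then (1:ℝ) else 0 := by
    rintro ⟨α, a⟩ ⟨β, b⟩
    by_cases hab : α = β
    · subst hab
      have h1 : B (Em (mv ⟨α,a⟩)) (Em (nv ⟨α,b⟩)) = PW α (db α a) (cb α b) :=
        (hPWapp α _ _).symm
      rw [h1, LinearMap.BilinForm.apply_dualBasis_left]
      rcases eq_or_ne a b with h2 | h2
      · subst h2; simp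
      · rw [if_neg (fun h => h2 h.symm), if_neg]
        intro h
        exact h2 (by simpa using (Sigma.mk.inj_iff.mp h).2)
    · have h0 := hPorth ↑α α.2 ↑β β.2 (fun h => hab (Subtype.ext h)) _ (hmvW ⟨α,a⟩) _
        (hnvW ⟨β,b⟩)
      rw [h0, if_neg]
      intro h
      exact hab (congrArg Sigma.fst h)
  -- V-side families
  let Yv : ((α : {a // a ∈ Sigmaplus}) × σ α) → L := fun i => Em (nv i)
  let Ytv : ((α : {a // a ∈ Sigmaplus}) × σ α) → L := fun i => Em (mv i)
  have hYspan : Submodule.span ℝ (Set.range Yv) = 𝔭 ⊓ (𝔨 ⊔ 𝔫) := by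
    have h1 : Set.range Yv = Em '' Set.range nv := by
      rw [show Yv = Em ∘ nv from rfl, Set.range_comp]
    rw [h1, Submodule.span_image, hnvspan]
    apply le_antisymm
    · rintro _ ⟨z, hz, rfl⟩
      exact hEV z hz
    · intro v hv
      obtain ⟨z, hz, hze⟩ := hEsurj v hv
      exact ⟨z, hz, hze⟩
  have hYtV : ∀ i, Ytv i ∈ 𝔭 ⊓ (𝔨 ⊔ 𝔫) := fun i => hEV _ (hmvn i)
  -- bilinear maps
  let Fκ : L →ₗ[ℝ] L →ₗ[ℝ] L := LinearMap.mk₂ ℝ (fun w v => ⁅w, κ v⁆)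
    (fun m₁ m₂ n => add_lie m₁ m₂ (κ n))
    (fun cc m n => smul_lie cc m (κ n))
    (fun m n₁ n₂ => by simp only [map_add, lie_add])
    (fun cc m n => by simp only [map_smul, lie_smul])
  have hSeq : ∑ j, ⁅Xt j, κ (X j)⁆ = ∑ i, ⁅Ytv i, κ (Yv i)⁆ := by
    have h := contr_eq (B : L →ₗ[ℝ] L →ₗ[ℝ] ℝ) hBsymm Fκ (𝔭 ⊓ (𝔨 ⊔ 𝔫)) X Xt Yv Ytv hXspan
      hYspan hXt hYtV hdual hPdual
    simpa only [Fκ, LinearMap.mk₂_apply] using h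
  -- per-term decomposition
  have hterm : ∀ i, ⁅Ytv i, κ (Yv i)⁆ =
      -(⁅mv i, nv i⁆ - θ ⁅mv i, nv i⁆) - (⁅mv i, θ (nv i)⁆ - ⁅θ (mv i), nv i⁆) := by
    intro i
    have h1 : κ (Yv i) = -(nv i + θ (nv i)) := hκE _ (hnvn i)
    have h2 : Ytv i = mv i - θ (mv i) := hEmApp _
    rw [h1, h2, hθlie]
    simp only [lie_neg, lie_add, sub_lie, lie_sub, neg_lie, neg_sub, neg_neg, neg_add]
    abel
  -- the antisymmetric part vanishes blockwise
  let Fa : L →ₗ[ℝ] L →ₗ[ℝ] L := LinearMap.mk₂ ℝ (fun w v => ⁅w, v⁆ - θ ⁅w, v⁆)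
    (fun m₁ m₂ n => by simp only [add_lie, hθadd]; abel)
    (fun cc m n => by simp only [smul_lie, hθsmul, smul_sub])
    (fun m n₁ n₂ => by simp only [lie_add, hθadd]; abel)
    (fun cc m n => by simp only [lie_smul, hθsmul, smul_sub])
  let PL : L →ₗ[ℝ] L →ₗ[ℝ] ℝ := B.compl₁₂ Em Em
  have hPLapp : ∀ v w, PL v w = B (Em v) (Em w) := by
    intro v w
    simp [PL, LinearMap.compl₁₂_apply]
  have hPLsymm : ∀ v w, PL v w = PL w v := by
    intro v w
    rw [hPLapp, hPLapp, hBsymm]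
  have hblock : ∀ α : {a // a ∈ Sigmaplus},
      ∑ a : σ α, (⁅(↑(db α a) : L), ↑(cb α a)⁆ - θ ⁅(↑(db α a) : L), ↑(cb α a)⁆) = 0 := by
    intro α
    set xc : σ α → L := fun a => ↑(cb α a) with hxc
    set xd : σ α → L := fun a => ↑(db α a) with hxd
    have hd1' : ∀ a b, PL (xd a) (xc b) = if a = b then 1 else 0 := by
      intro a b
      rw [hPLapp]
      have h1 : B (Em (xd a)) (Em (xc b)) = PW α (db α a) (cb α b) := (hPWapp α _ _).symm
      rw [h1, LinearMap.BilinForm.apply_dualBasis_left]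
      exact if_congr eq_comm rfl rfl
    have hd2' : ∀ a b, PL (xc a) (xd b) = if a = b then 1 else 0 := by
      intro a b
      rw [hPLsymm, hd1' b a]
      exact if_congr eq_comm rfl rfl
    have hc : ∑ a, Fa (xd a) (xc a) = ∑ a, Fa (xc a) (xd a) := by
      refine contr_eq PL hPLsymm Fa (W ↑α) xc xd xd xc (hspanW α (cb α)) (hspanW α (db α))
        (fun a => (db α a).2) (fun a => (cb α a).2) hd1' hd2'
    have hanti : ∀ w v : L, Fa w v = -Fa v w := by
      intro w v
      simp only [Fa, LinearMap.mk₂_apply]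
      rw [show ⁅w, v⁆ = -⁅v, w⁆ from by rw [← lie_skew], hθneg]
      abel
    have hss : ∑ a, Fa (xd a) (xc a) = -∑ a, Fa (xd a) (xc a) := by
      conv_lhs => rw [hc]
      rw [← Finset.sum_neg_distrib]
      exact Finset.sum_congr rfl fun a _ => hanti (xc a) (xd a)
    have h2 : (2:ℝ) • ∑ a, Fa (xd a) (xc a) = 0 := by
      rw [two_smul]
      nth_rewrite 2 [hss]
      abel
    have h3 : ∑ a, Fa (xd a) (xc a) = 0 := by simpa using h2
    simpa only [Fa, LinearMap.mk₂_apply] using h3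
  have hA : ∑ i, (⁅mv i, nv i⁆ - θ ⁅mv i, nv i⁆) = 0 := by
    rw [← Finset.univ_sigma_univ, Finset.sum_sigma]
    exact Finset.sum_eq_zero fun α _ => hblock α
  -- the centralizing part lies in 𝔞
  have hC : ∀ i, (⁅mv i, θ (nv i)⁆ - ⁅θ (mv i), nv i⁆) ∈ 𝔞 := by
    intro i
    refine h𝔞max _ ?_ ?_
    · refine (h𝔭 _).2 ?_
      rw [hθsub, hθlie, hθlie, hθ, hθ]
      abel
    · intro y hy
      have hbm : ⁅y, mv i⁆ = (↑i.1 : ↥𝔞 →ₗ[ℝ] ℝ) ⟨y, hy⟩ • mv i :=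
        hWapp _ _ (hmvW i) ⟨y, hy⟩
      have hbn : ⁅y, nv i⁆ = (↑i.1 : ↥𝔞 →ₗ[ℝ] ℝ) ⟨y, hy⟩ • nv i :=
        hWapp _ _ (hnvW i) ⟨y, hy⟩
      have hbtm : ⁅y, θ (mv i)⁆ = -((↑i.1 : ↥𝔞 →ₗ[ℝ] ℝ) ⟨y, hy⟩) • θ (mv i) := by
        have := hWapp _ _ (hWθ _ _ (hmvW i)) ⟨y, hy⟩
        simpa using this
      have hbtn : ⁅y, θ (nv i)⁆ = -((↑i.1 : ↥𝔞 →ₗ[ℝ] ℝ) ⟨y, hy⟩) • θ (nv i) := by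
        have := hWapp _ _ (hWθ _ _ (hnvW i)) ⟨y, hy⟩
        simpa using this
      have e1 : ⁅y, ⁅mv i, θ (nv i)⁆⁆ = 0 := by
        rw [leibniz_lie, hbm, hbtn, smul_lie, lie_smul, neg_smul]
        abel
      have e2 : ⁅y, ⁅θ (mv i), nv i⁆⁆ = 0 := by
        rw [leibniz_lie, hbtm, hbn, smul_lie, lie_smul, neg_smul]
        abel
      have e3 : ⁅y, ⁅mv i, θ (nv i)⁆ - ⁅θ (mv i), nv i⁆⁆ = 0 := by
        rw [lie_sub, e1, e2, sub_zero]
      rw [← lie_skew, e3, neg_zero]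
  have hSmem : (∑ j, ⁅Xt j, κ (X j)⁆) ∈ 𝔞 := by
    rw [hSeq, Finset.sum_congr rfl fun i _ => hterm i]
    have hsplit : ∑ i, (-(⁅mv i, nv i⁆ - θ ⁅mv i, nv i⁆) - (⁅mv i, θ (nv i)⁆ - ⁅θ (mv i), nv i⁆))
        = -(∑ i, (⁅mv i, nv i⁆ - θ ⁅mv i, nv i⁆)) - ∑ i, (⁅mv i, θ (nv i)⁆ - ⁅θ (mv i), nv i⁆) := by
      rw [Finset.sum_sub_distrib, Finset.sum_neg_distrib]
    rw [hsplit, hA, neg_zero, zero_sub]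
    exact neg_mem (Submodule.sum_mem _ fun i _ => hC i)
  refine ⟨hSmem, fun H => ?_⟩
  rw [hSeq]
  simp only [map_sum, LinearMap.sum_apply]
  have hterm2 : ∀ i, B ⁅Ytv i, κ (Yv i)⁆ (H:L) = (↑i.1 : ↥𝔞 →ₗ[ℝ] ℝ) H := by
    intro i
    rw [hBinv]
    have h1 : ⁅κ (Yv i), (H:L)⁆ = (↑i.1 : ↥𝔞 →ₗ[ℝ] ℝ) H • Yv i := by
      rw [hκE _ (hnvn i)]
      have hb1 : ⁅(H:L), nv i⁆ = (↑i.1 : ↥𝔞 →ₗ[ℝ] ℝ) H • nv i := hWapp _ _ (hnvW i) H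
      have hb2 : ⁅(H:L), θ (nv i)⁆ = -((↑i.1 : ↥𝔞 →ₗ[ℝ] ℝ) H) • θ (nv i) := by
        have := hWapp _ _ (hWθ _ _ (hnvW i)) H
        simpa using this
      have hyv : Yv i = nv i - θ (nv i) := hEmApp _
      rw [neg_lie, show ⁅nv i + θ (nv i), (H:L)⁆ = -⁅(H:L), nv i + θ (nv i)⁆ from by
        rw [← lie_skew], neg_neg, lie_add, hb1, hb2, hyv]
      simp only [neg_smul, smul_sub]
      abel
    rw [h1, map_smul, smul_eq_mul, hPdual i i]
    simp
  rw [Finset.sum_congr rfl fun i _ => hterm2 i]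
  rw [← Finset.univ_sigma_univ, Finset.sum_sigma]
  have hcount : ∀ α : {a // a ∈ Sigmaplus},
      ∑ _a : σ α, (↑α : ↥𝔞 →ₗ[ℝ] ℝ) H = (Module.finrank ℝ ↥(W ↑α) : ℝ) * (↑α : ↥𝔞 →ₗ[ℝ] ℝ) H := by
    intro α
    rw [show (∑ _a : σ α, (↑α : ↥𝔞 →ₗ[ℝ] ℝ) H)
        = ∑ _a : Fin (Module.finrank ℝ ↥(W ↑α)), (↑α : ↥𝔞 →ₗ[ℝ] ℝ) H from rfl]
    rw [Fin.sum_const, nsmul_eq_mul]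
  rw [Finset.sum_congr rfl fun α _ => hcount α]
  rw [show (∑ α : {a // a ∈ Sigmaplus}, (Module.finrank ℝ ↥(W ↑α) : ℝ) * (↑α : ↥𝔞 →ₗ[ℝ] ℝ) H)
      = ∑ α ∈ Sigmaplus, (Module.finrank ℝ ↥(W α) : ℝ) * α H from
    Finset.sum_coe_sort Sigmaplus (fun α => (Module.finrank ℝ ↥(W α) : ℝ) * α H)]
  ring
end

section
/- Let h_{p,q}(ξ) = cos^{p+q}(ξ)·F(−p, −q, n−1, −tan²(ξ)) and φ_{p,q}(ξ,ϕ) = e^{i(p−q)ϕ} h_{p,q}(ξ) be the M-spherical function of the U(n)-representation Y_{p,q} on S^{2n-1}. Then 2(p+q+n−1)·cos(ξ)cos(ϕ)·φ_{p,q} = (p+n−1)·φ_{p+1,q} + q·φ_{p,q−1} + (q+n−1)·φ_{p,q+1} + p·φ_{p−1,q}. -/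
/-- The Gauss hypergeometric series `F(a,b,c,z) = ∑ (a)ₙ(b)ₙ/(c)ₙ · zⁿ/n!`,
where `(q)ₙ = q(q+1)⋯(q+n-1)` is the Pochhammer symbol. -/
noncomputable def hypF (a b c z : ℝ) : ℝ :=
  ∑' n : ℕ,
    ((∏ i ∈ Finset.range n, (a + (i : ℝ))) * (∏ i ∈ Finset.range n, (b + (i : ℝ))) /
      (∏ i ∈ Finset.range n, (c + (i : ℝ)))) * z ^ n / (n.factorial : ℝ)

noncomputable def poch (a : ℝ) (k : ℕ) : ℝ := ∏ i ∈ Finset.range k, (a + (i : ℝ))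

lemma poch_zero (a : ℝ) : poch a 0 = 1 := by simp [poch]

lemma poch_succ (a : ℝ) (m : ℕ) : poch a (m + 1) = poch a m * (a + m) :=
  Finset.prod_range_succ _ _

lemma poch_succ' (a : ℝ) (m : ℕ) : poch a (m + 1) = a * poch (a + 1) m := by
  rw [poch, Finset.prod_range_succ']
  simp only [Nat.cast_zero, add_zero]
  rw [mul_comm]
  congr 1
  refine Finset.prod_congr rfl fun i _ => ?_
  push_cast; ring

lemma poch_pos {a : ℝ} (ha : 0 < a) (k : ℕ) : 0 < poch a k :=
  Finset.prod_pos fun i _ => by positivity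

lemma poch_neg_nat_eq_zero (p : ℕ) {k : ℕ} (h : p < k) : poch (-(p : ℝ)) k = 0 :=
  Finset.prod_eq_zero (Finset.mem_range.2 h) (by simp)

lemma poch_zero_left {k : ℕ} (hk : 0 < k) : poch 0 k = 0 :=
  Finset.prod_eq_zero (Finset.mem_range.2 hk) (by simp)

lemma hypF_eq_tsum (a b c x : ℝ) : hypF a b c x = ∑' k : ℕ, poch a k * poch b k / poch c k * x ^ k / k.factorial := rfl

lemma hypF_symm (a b c x : ℝ) : hypF a b c x = hypF b a c x := by
  rw [hypF_eq_tsum, hypF_eq_tsum]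
  exact tsum_congr fun k => by ring

lemma hypF_zero_right (a c x : ℝ) : hypF a 0 c x = 1 := by
  rw [hypF_eq_tsum]
  rw [tsum_eq_single 0 (fun k hk => by
    rw [poch_zero_left (Nat.pos_of_ne_zero hk)]; simp)]
  simp [poch_zero]

lemma hypF_eq_sum (p : ℕ) (b c x : ℝ) {N : ℕ} (hN : p < N) :
    hypF (-(p : ℝ)) b c x
      = ∑ k ∈ Finset.range N, poch (-(p : ℝ)) k * poch b k / poch c k * x ^ k / k.factorial := by
  rw [hypF_eq_tsum]
  exact tsum_eq_sum fun k hk => by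
    rw [poch_neg_nat_eq_zero p (lt_of_lt_of_le hN (le_of_not_gt fun h => hk (Finset.mem_range.2 h)))]
    simp

lemma coeffId (p q m : ℕ) {c : ℝ} (hc : 0 < c) (x : ℝ) :
    ((p : ℝ) + ((q : ℝ) + 1) + c) *
        (poch (-(p : ℝ)) (m+1) * poch (-((q : ℝ) + 1)) (m+1) / poch c (m+1) * x ^ (m+1) / (m+1).factorial)
      = ((p : ℝ) + c) *
          (poch (-((p : ℝ) + 1)) (m+1) * poch (-((q : ℝ) + 1)) (m+1) / poch c (m+1) * x ^ (m+1) / (m+1).factorial)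
        + ((q : ℝ) + 1) *
            (poch (-(p : ℝ)) (m+1) * poch (-(q : ℝ)) (m+1) / poch c (m+1) * x ^ (m+1) / (m+1).factorial)
        - ((q : ℝ) + 1) *
            (x * (poch (-(p : ℝ)) m * poch (-(q : ℝ)) m / poch c m * x ^ m / m.factorial)) := by
  have e1 : poch (-(p : ℝ)) (m+1) = poch (-(p : ℝ)) m * (-(p:ℝ) + m) := poch_succ _ _
  have e2 : poch (-((q : ℝ) + 1)) (m+1) = (-((q:ℝ)+1)) * poch (-(q : ℝ)) m := by
    rw [poch_succ']; congr 2; ring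
  have e3 : poch (-((p : ℝ) + 1)) (m+1) = (-((p:ℝ)+1)) * poch (-(p : ℝ)) m := by
    rw [poch_succ']; congr 2; ring
  have e4 : poch (-(q : ℝ)) (m+1) = poch (-(q : ℝ)) m * (-(q:ℝ) + m) := poch_succ _ _
  have e5 : poch c (m+1) = poch c m * (c + m) := poch_succ _ _
  have e6 : ((m+1).factorial : ℝ) = ((m:ℝ)+1) * m.factorial := by
    rw [Nat.factorial_succ]; push_cast; ring
  have hD : poch c m ≠ 0 := ne_of_gt (poch_pos hc m)
  have hcm : c + m ≠ 0 := by positivity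
  have hf : (m.factorial : ℝ) ≠ 0 := by positivity
  have hm1 : ((m:ℝ) + 1) ≠ 0 := by positivity
  rw [e1, e2, e3, e4, e5, e6, pow_succ]
  field_simp
  ring

lemma sum_trick (M : ℕ) (t u v x : ℝ) (A B C : ℕ → ℝ)
    (h0 : t * A 0 = u * B 0 + v * C 0) (hCM : C M = 0)
    (hstep : ∀ m, t * A (m + 1) = u * B (m + 1) + v * C (m + 1) - v * (x * C m)) :
    t * ∑ k ∈ Finset.range (M + 1), A k
      = u * ∑ k ∈ Finset.range (M + 1), B k
        + v * (1 - x) * ∑ k ∈ Finset.range (M + 1), C k := by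
  have l1 : t * ∑ k ∈ Finset.range (M + 1), A k
      = (∑ m ∈ Finset.range M, t * A (m + 1)) + t * A 0 := by
    rw [Finset.mul_sum]; exact Finset.sum_range_succ' (fun k => t * A k) M
  have l2 : u * ∑ k ∈ Finset.range (M + 1), B k
      = (∑ m ∈ Finset.range M, u * B (m + 1)) + u * B 0 := by
    rw [Finset.mul_sum]; exact Finset.sum_range_succ' (fun k => u * B k) M
  have l3 : v * ∑ k ∈ Finset.range (M + 1), C k
      = (∑ m ∈ Finset.range M, v * C (m + 1)) + v * C 0 := by
    rw [Finset.mul_sum]; exact Finset.sum_range_succ' (fun k => v * C k) M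
  have l4 : (v * x) * ∑ k ∈ Finset.range (M + 1), C k
      = ∑ m ∈ Finset.range M, v * (x * C m) := by
    rw [Finset.sum_range_succ, hCM, add_zero, Finset.mul_sum]
    exact Finset.sum_congr rfl fun m _ => by ring
  have l5 : ∑ m ∈ Finset.range M, t * A (m + 1)
      = (∑ m ∈ Finset.range M, u * B (m + 1)) + (∑ m ∈ Finset.range M, v * C (m + 1))
        - ∑ m ∈ Finset.range M, v * (x * C m) := by
    rw [← Finset.sum_add_distrib, ← Finset.sum_sub_distrib]
    exact Finset.sum_congr rfl fun m _ => hstep m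
  have key : v * (1 - x) * ∑ k ∈ Finset.range (M + 1), C k
      = v * ∑ k ∈ Finset.range (M + 1), C k
        - (v * x) * ∑ k ∈ Finset.range (M + 1), C k := by ring
  rw [key, l1, l2, l3, l4, l5]
  linarith [h0]

lemma keyF (p q : ℕ) {c : ℝ} (hc : 0 < c) (x : ℝ) :
    ((p : ℝ) + ((q : ℝ) + 1) + c) * hypF (-(p : ℝ)) (-((q : ℝ) + 1)) c x
      = ((p : ℝ) + c) * hypF (-((p : ℝ) + 1)) (-((q : ℝ) + 1)) c x
        + ((q : ℝ) + 1) * (1 - x) * hypF (-(p : ℝ)) (-(q : ℝ)) c x := by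
  have ep1 : (-((p : ℝ) + 1)) = (-((p + 1 : ℕ) : ℝ)) := by push_cast; ring
  rw [hypF_eq_sum p _ c x (show p < (p + q + 1) + 1 by omega),
      hypF_eq_sum p _ c x (show p < (p + q + 1) + 1 by omega), ep1,
      hypF_eq_sum (p + 1) _ c x (show p + 1 < (p + q + 1) + 1 by omega), ← ep1]
  refine sum_trick (p + q + 1) _ _ _ x
      (fun k => poch (-(p : ℝ)) k * poch (-((q : ℝ) + 1)) k / poch c k * x ^ k / k.factorial)
      (fun k => poch (-((p : ℝ) + 1)) k * poch (-((q : ℝ) + 1)) k / poch c k * x ^ k / k.factorial)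
      (fun k => poch (-(p : ℝ)) k * poch (-(q : ℝ)) k / poch c k * x ^ k / k.factorial)
      ?_ ?_ (fun m => coeffId p q m hc x)
  · simp [poch_zero]; ring_nf
  · show poch (-(p : ℝ)) (p + q + 1) * _ / _ * _ / _ = 0
    rw [poch_neg_nat_eq_zero p (show p < p + q + 1 by omega)]
    simp

noncomputable def hR (n p q : ℕ) (ξ : ℝ) : ℝ :=
  Real.cos ξ ^ (p + q) * hypF (-(p : ℝ)) (-(q : ℝ)) ((n : ℝ) - 1) (-(Real.tan ξ) ^ 2)

lemma hR_comm (n p q : ℕ) (ξ : ℝ) : hR n p q ξ = hR n q p ξ := by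
  rw [hR, hR, hypF_symm, Nat.add_comm]

lemma key1h (n p q : ℕ) (hn : 2 ≤ n) (ξ : ℝ) (hξ : Real.cos ξ ≠ 0) :
    ((p : ℝ) + q + n - 1) * (Real.cos ξ * hR n p q ξ)
      = ((p : ℝ) + n - 1) * hR n (p + 1) q ξ + (q : ℝ) * hR n p (q - 1) ξ := by
  have hc : (0 : ℝ) < (n : ℝ) - 1 := by
    have : (2 : ℝ) ≤ (n : ℝ) := by exact_mod_cast hn
    linarith
  rcases q with _ | q
  · simp only [hR, Nat.cast_zero, neg_zero, hypF_zero_right, Nat.add_zero, Nat.zero_sub,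
      Nat.cast_ofNat, mul_one, zero_mul, add_zero]
    rw [pow_succ]
    ring
  · have hx : Real.cos ξ ^ 2 * (1 - (-(Real.tan ξ) ^ 2)) = 1 := by
      rw [Real.tan_eq_sin_div_cos]
      field_simp
      linear_combination Real.sin_sq_add_cos_sq ξ
    have hk := keyF p q hc (-(Real.tan ξ) ^ 2)
    simp only [hR, Nat.add_sub_cancel]
    have ecast1 : (-((q + 1 : ℕ) : ℝ)) = -((q : ℝ) + 1) := by push_cast; ring
    have ecast2 : (-((p + 1 : ℕ) : ℝ)) = -((p : ℝ) + 1) := by push_cast; ring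
    rw [ecast1, ecast2]
    push_cast
    linear_combination (Real.cos ξ ^ (p + q + 2)) * hk
      + (((q : ℝ) + 1) * hypF (-(p : ℝ)) (-(q : ℝ)) ((n:ℝ)-1) (-(Real.tan ξ) ^ 2)
          * Real.cos ξ ^ (p + q)) * hx

lemma key2h (n p q : ℕ) (hn : 2 ≤ n) (ξ : ℝ) (hξ : Real.cos ξ ≠ 0) :
    ((p : ℝ) + q + n - 1) * (Real.cos ξ * hR n p q ξ)
      = ((q : ℝ) + n - 1) * hR n p (q + 1) ξ + (p : ℝ) * hR n (p - 1) q ξ := by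
  have := key1h n q p hn ξ hξ
  rw [hR_comm n q p, hR_comm n (q + 1) p, hR_comm n q (p - 1)] at this
  linarith [this]

/-- The `M`-spherical function of the `U(n)`-type `Y_{p,q}` on `S^{2n-1}` in angular
coordinates: `φ_{p,q}(ξ,ϕ) = e^{i(p-q)ϕ}·cos^{p+q}(ξ)·F(-p, -q, n-1, -tan²ξ)`. -/
noncomputable def sphericalSU (n p q : ℕ) (ξ ϕ : ℝ) : ℂ :=
  Complex.exp (Complex.I * (((p : ℝ) - (q : ℝ) : ℝ) : ℂ) * (ϕ : ℂ)) *
    ((Real.cos ξ ^ (p + q) *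
      hypF (-(p : ℝ)) (-(q : ℝ)) ((n : ℝ) - 1) (-(Real.tan ξ) ^ 2) : ℝ) : ℂ)

lemma sphericalSU_eq (n p q : ℕ) (ξ ϕ : ℝ) :
    sphericalSU n p q ξ ϕ
      = Complex.exp (Complex.I * ϕ) ^ p * Complex.exp (-(Complex.I * ϕ)) ^ q
          * ((hR n p q ξ : ℝ) : ℂ) := by
  rw [sphericalSU, hR, ← Complex.exp_nat_mul, ← Complex.exp_nat_mul, ← Complex.exp_add]
  rw [mul_assoc]
  congr 1
  push_cast
  ring

/-- Recursion for the spherical functions of `SU(n,1)`, `n ≥ 2`: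
`2(p+q+n-1)·cos ξ cos ϕ·φ_{p,q} = (p+n-1)·φ_{p+1,q} + q·φ_{p,q-1}
   + (q+n-1)·φ_{p,q+1} + p·φ_{p-1,q}`. -/
theorem sphericalSU_recursion (n : ℕ) (hn : 2 ≤ n) :
    ∀ (p q : ℕ) (ξ ϕ : ℝ), Real.cos ξ ≠ 0 →
      2 * ((p : ℂ) + q + n - 1) * ((Real.cos ξ : ℝ) : ℂ) * ((Real.cos ϕ : ℝ) : ℂ) *
          sphericalSU n p q ξ ϕ
        = ((p : ℂ) + n - 1) * sphericalSU n (p + 1) q ξ ϕ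
          + (q : ℂ) * sphericalSU n p (q - 1) ξ ϕ
          + ((q : ℂ) + n - 1) * sphericalSU n p (q + 1) ξ ϕ
          + (p : ℂ) * sphericalSU n (p - 1) q ξ ϕ := by
  intro p q ξ ϕ hξ
  have k1 := key1h n p q hn ξ hξ
  have k2 := key2h n p q hn ξ hξ
  have k1C := congrArg (Complex.ofReal) k1
  have k2C := congrArg (Complex.ofReal) k2
  have hwz : Complex.exp (Complex.I * (ϕ:ℂ)) * Complex.exp (-(Complex.I * (ϕ:ℂ))) = 1 := by
    rw [← Complex.exp_add, add_neg_cancel, Complex.exp_zero]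
  have hcos : Complex.cos (ϕ:ℂ) * 2
      = Complex.exp (Complex.I * (ϕ:ℂ)) + Complex.exp (-(Complex.I * (ϕ:ℂ))) := by
    have e : (ϕ:ℂ) * Complex.I = Complex.I * (ϕ:ℂ) := mul_comm _ _
    rw [Complex.cos, neg_mul, e]
    ring
  rw [sphericalSU_eq, sphericalSU_eq, sphericalSU_eq, sphericalSU_eq, sphericalSU_eq]
  rcases p with _ | p <;> rcases q with _ | q <;>
    simp only [Nat.zero_sub, Nat.add_sub_cancel] <;>
    push_cast at k1C k2C ⊢
  · -- p = 0, q = 0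
    linear_combination ((0 + 0 + (n:ℂ) - 1) * Complex.cos (ξ:ℂ) * ((hR n 0 0 ξ : ℝ) : ℂ)) * hcos
      + Complex.exp (Complex.I * (ϕ:ℂ)) * k1C + Complex.exp (-(Complex.I * (ϕ:ℂ))) * k2C
  · -- p = 0, q = q+1
    linear_combination
      ((0 + ((q:ℂ)+1) + (n:ℂ) - 1) * Complex.cos (ξ:ℂ)
          * (Complex.exp (-(Complex.I * (ϕ:ℂ))) ^ (q+1)) * ((hR n 0 (q+1) ξ : ℝ) : ℂ)) * hcos
      + (Complex.exp (Complex.I * (ϕ:ℂ)) * Complex.exp (-(Complex.I * (ϕ:ℂ))) ^ (q+1)) * k1C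
      + (Complex.exp (-(Complex.I * (ϕ:ℂ))) ^ (q+2)) * k2C
      + (((q:ℂ)+1) * ((hR n 0 q ξ : ℝ) : ℂ) * Complex.exp (-(Complex.I * (ϕ:ℂ))) ^ q) * hwz
  · -- p = p+1, q = 0
    linear_combination
      ((((p:ℂ)+1) + 0 + (n:ℂ) - 1) * Complex.cos (ξ:ℂ)
          * (Complex.exp (Complex.I * (ϕ:ℂ)) ^ (p+1)) * ((hR n (p+1) 0 ξ : ℝ) : ℂ)) * hcos
      + (Complex.exp (Complex.I * (ϕ:ℂ)) ^ (p+2)) * k1C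
      + (Complex.exp (Complex.I * (ϕ:ℂ)) ^ (p+1) * Complex.exp (-(Complex.I * (ϕ:ℂ)))) * k2C
      + (((p:ℂ)+1) * ((hR n p 0 ξ : ℝ) : ℂ) * Complex.exp (Complex.I * (ϕ:ℂ)) ^ p) * hwz
  · -- p = p+1, q = q+1
    linear_combination
      ((((p:ℂ)+1) + ((q:ℂ)+1) + (n:ℂ) - 1) * Complex.cos (ξ:ℂ)
          * (Complex.exp (Complex.I * (ϕ:ℂ)) ^ (p+1) * Complex.exp (-(Complex.I * (ϕ:ℂ))) ^ (q+1))
          * ((hR n (p+1) (q+1) ξ : ℝ) : ℂ)) * hcos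
      + (Complex.exp (Complex.I * (ϕ:ℂ)) ^ (p+2) * Complex.exp (-(Complex.I * (ϕ:ℂ))) ^ (q+1)) * k1C
      + (Complex.exp (Complex.I * (ϕ:ℂ)) ^ (p+1) * Complex.exp (-(Complex.I * (ϕ:ℂ))) ^ (q+2)) * k2C
      + (((q:ℂ)+1) * ((hR n (p+1) q ξ : ℝ) : ℂ)
          * (Complex.exp (Complex.I * (ϕ:ℂ)) ^ (p+1) * Complex.exp (-(Complex.I * (ϕ:ℂ))) ^ q)) * hwz
      + (((p:ℂ)+1) * ((hR n p (q+1) ξ : ℝ) : ℂ)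
          * (Complex.exp (Complex.I * (ϕ:ℂ)) ^ p * Complex.exp (-(Complex.I * (ϕ:ℂ))) ^ (q+1))) * hwz
end
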